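/- Let n = 2m, let f : F_{2^n} → F_2 be bent with dual f*, let μ_1, …, μ_r ∈ F_{2^n} be nonzero, and let φ : F_{2^n} → F_2^r be given by φ(x) = (Tr(μ_1 x), …, Tr(μ_r x)). Then the following are equivalent: (1) there exists φ' = (φ'_1,…,φ'_r) : F_{2^n} → F_2^r such that for every ω ∈ F_2^r and every β ∈ F_{2^n}, the Walsh–Hadamard transform of x ↦ f(x) + ω·φ(x) at β equals 2^m·(-1)^{f*(β) + ω·φ'(β)}; (2) D_{μ_i} D_{μ_j} f* = 0 (identically) for all 1 ≤ i < j ≤ r. -/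

import Mathlib

noncomputable section

noncomputable instance (n : ℕ) : Fintype (GaloisField 2 n) := Fintype.ofFinite _

/-- `(-1)^c` for `c ∈ F_2`. -/
def sgn (c : ZMod 2) : ℤ := if c = 0 then 1 else -1

/-- The absolute trace `Tr : F_{2^n} → F_2`. -/
def Tr {n : ℕ} (x : GaloisField 2 n) : ZMod 2 :=
  Algebra.trace (ZMod 2) (GaloisField 2 n) x

/-- Walsh–Hadamard transform of a Boolean function on `F_{2^n}`. -/
def walsh {n : ℕ} (f : GaloisField 2 n → ZMod 2) (μ : GaloisField 2 n) : ℤ :=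
  ∑ x : GaloisField 2 n, sgn (f x + Tr (μ * x))

/-- `f` is bent (where `n = 2m`): all Walsh coefficients are `±2^m`. -/
def IsBent {n : ℕ} (m : ℕ) (f : GaloisField 2 n → ZMod 2) : Prop :=
  ∀ μ, walsh f μ = 2 ^ m ∨ walsh f μ = -(2 ^ m)

/-- `fs` is the dual of the bent function `f` (where `n = 2m`). -/
def IsDualOf {n : ℕ} (m : ℕ) (fs f : GaloisField 2 n → ZMod 2) : Prop :=
  ∀ μ, walsh f μ = 2 ^ m * sgn (fs μ)

lemma sgn_eq_iff (a b : ZMod 2) : sgn a = sgn b ↔ a = b := by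
  revert a b; decide

lemma zmod2_two : (2 : ZMod 2) = 0 := by decide

lemma Tr_add {n : ℕ} (a b : GaloisField 2 n) : Tr (a + b) = Tr a + Tr b := by
  unfold Tr; exact map_add _ a b

lemma Tr_algebraMap_mul {n : ℕ} (c : ZMod 2) (a : GaloisField 2 n) :
    Tr (algebraMap (ZMod 2) (GaloisField 2 n) c * a) = c * Tr a := by
  unfold Tr
  rw [← Algebra.smul_def, map_smul, smul_eq_mul]

/-- shifting the argument of the Walsh transform by adding a linear function -/
lemma walsh_shift {n r : ℕ} (f : GaloisField 2 n → ZMod 2)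
    (μ : Fin r → GaloisField 2 n) (ω : Fin r → ZMod 2) (β : GaloisField 2 n) :
    walsh (fun x => f x + ∑ i, ω i * Tr (μ i * x)) β
      = walsh f (β + ∑ i, algebraMap (ZMod 2) (GaloisField 2 n) (ω i) * μ i) := by
  unfold walsh
  apply Finset.sum_congr rfl
  intro x _
  congr 1
  have h1 : ∀ i, ω i * Tr (μ i * x)
      = Tr (algebraMap (ZMod 2) (GaloisField 2 n) (ω i) * μ i * x) := by
    intro i
    rw [mul_assoc, Tr_algebraMap_mul]
  calc f x + ∑ i, ω i * Tr (μ i * x) + Tr (β * x)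
      = f x + (Tr (β * x) + ∑ i, Tr (algebraMap (ZMod 2) (GaloisField 2 n) (ω i) * μ i * x)) := by
        rw [Finset.sum_congr rfl (fun i _ => h1 i)]; ring
    _ = f x + Tr ((β + ∑ i, algebraMap (ZMod 2) (GaloisField 2 n) (ω i) * μ i) * x) := by
        congr 1
        rw [add_mul, Tr_add, Finset.sum_mul]
        congr 1
        unfold Tr
        exact (map_sum (Algebra.trace (ZMod 2) (GaloisField 2 n)) _ Finset.univ).symm

theorem statement7 {n m r : ℕ} (hn : n = 2 * m)
    (f fs : GaloisField 2 n → ZMod 2) (hf : IsBent m f) (hfd : IsDualOf m fs f)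
    (μ : Fin r → GaloisField 2 n) (hμ : ∀ i, μ i ≠ 0) :
    (∃ φ' : Fin r → (GaloisField 2 n → ZMod 2),
      ∀ (ω : Fin r → ZMod 2) (β : GaloisField 2 n),
        walsh (fun x => f x + ∑ i, ω i * Tr (μ i * x)) β
          = 2 ^ m * sgn (fs β + ∑ i, ω i * φ' i β)) ↔
    (∀ i j : Fin r, i < j →
      ∀ x, fs x + fs (x + μ i) + fs (x + μ j) + fs (x + μ i + μ j) = 0) := by
  have hpow : (2 : ℤ) ^ m ≠ 0 := by positivity
  -- reformulate the LHS
  have key : ∀ (φ' : Fin r → (GaloisField 2 n → ZMod 2)) (ω : Fin r → ZMod 2)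
      (β : GaloisField 2 n),
      (walsh (fun x => f x + ∑ i, ω i * Tr (μ i * x)) β
          = 2 ^ m * sgn (fs β + ∑ i, ω i * φ' i β)) ↔
      fs (β + ∑ i, algebraMap (ZMod 2) (GaloisField 2 n) (ω i) * μ i)
          = fs β + ∑ i, ω i * φ' i β := by
    intro φ' ω β
    rw [walsh_shift, hfd]
    constructor
    · intro h
      exact (sgn_eq_iff _ _).1 (mul_left_cancel₀ hpow h)
    · intro h; rw [h]
  constructor
  · rintro ⟨φ', hφ⟩ i j hij x
    have hij' : i ≠ j := ne_of_lt hij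
    -- single indicator
    have single : ∀ k : Fin r, fs (x + μ k) = fs x + φ' k x := by
      intro k
      have := (key φ' (fun l => if l = k then 1 else 0) x).1 (hφ _ x)
      simpa [Finset.sum_ite_eq', map_one, map_zero] using this
    -- double indicator
    set ω2 : Fin r → ZMod 2 := fun l => (if l = i then 1 else 0) + (if l = j then 1 else 0) with hω2
    have hdouble := (key φ' ω2 x).1 (hφ ω2 x)
    have hs : (∑ l, algebraMap (ZMod 2) (GaloisField 2 n) (ω2 l) * μ l) = μ i + μ j := by
      simp only [hω2, map_add, add_mul, Finset.sum_add_distrib]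
      simp [apply_ite (algebraMap (ZMod 2) (GaloisField 2 n)), ite_mul,
        Finset.sum_ite_eq']
    have hw : (∑ l, ω2 l * φ' l x) = φ' i x + φ' j x := by
      simp only [hω2, add_mul, Finset.sum_add_distrib, ite_mul, one_mul, zero_mul,
        Finset.sum_ite_eq']
      simp
    rw [hs, hw] at hdouble
    rw [← add_assoc] at hdouble
    rw [single i, single j, hdouble]
    have h2 : (2 : ZMod 2) = 0 := zmod2_two
    ring_nf
    rw [show (4 : ZMod 2) = 0 by decide, show (2 : ZMod 2) = 0 by decide]
    ring
  · intro hD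
    -- second derivative facts for all i ≠ j
    have hD' : ∀ i j : Fin r, i ≠ j → ∀ x,
        fs (x + (μ i + μ j)) = fs x + fs (x + μ i) + fs (x + μ j) := by
      intro i j hij x
      rcases lt_or_gt_of_ne hij with h | h
      · have := hD i j h x
        have h2 : ∀ a : ZMod 2, a + a = 0 := by decide
        rw [← add_assoc]
        have : fs (x + μ i + μ j) = fs x + fs (x + μ i) + fs (x + μ j) := by
          have e := hD i j h x
          have : fs x + fs (x + μ i) + fs (x + μ j)
              + (fs x + fs (x + μ i) + fs (x + μ j) + fs (x + μ i + μ j)) =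
              fs x + fs (x + μ i) + fs (x + μ j) + 0 := by rw [e]
          calc fs (x + μ i + μ j)
              = fs x + fs (x + μ i) + fs (x + μ j)
                + (fs x + fs (x + μ i) + fs (x + μ j) + fs (x + μ i + μ j)) := by
                  ring_nf
                  rw [show (2 : ZMod 2) = 0 by decide]
                  ring
            _ = fs x + fs (x + μ i) + fs (x + μ j) := by rw [e, add_zero]
        exact this
      · have e := hD j i h x
        rw [show μ i + μ j = μ j + μ i from add_comm _ _, ← add_assoc]
        calc fs (x + μ j + μ i)
            = fs x + fs (x + μ j) + fs (x + μ i)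
              + (fs x + fs (x + μ j) + fs (x + μ i) + fs (x + μ j + μ i)) := by
                ring_nf
                rw [show (2 : ZMod 2) = 0 by decide]
                ring
          _ = fs x + fs (x + μ j) + fs (x + μ i) := by rw [e, add_zero]
          _ = fs x + fs (x + μ i) + fs (x + μ j) := by ring
    -- the dual derivative functions
    refine ⟨fun i x => fs x + fs (x + μ i), ?_⟩
    intro ω β
    refine (key (fun i x => fs x + fs (x + μ i)) ω β).mpr ?_
    -- invariance of derivatives under shifts
    have hinv : ∀ i j : Fin r, i ≠ j → ∀ x,
        fs (x + μ i) + fs (x + μ i + μ j) = fs x + fs (x + μ j) := by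
      intro i j hij x
      have := hD' i j hij x
      rw [← add_assoc] at this
      rw [this]
      ring_nf
      rw [show (2 : ZMod 2) = 0 by decide]
      ring
    -- main induction over finsets
    have main : ∀ S : Finset (Fin r), ∀ β : GaloisField 2 n,
        fs (β + ∑ k ∈ S, μ k) = fs β + ∑ k ∈ S, (fs β + fs (β + μ k)) := by
      intro S
      induction S using Finset.induction_on with
      | empty => intro β; simp
      | insert a S ha ih =>
        intro β
        rw [Finset.sum_insert ha, Finset.sum_insert ha]
        have e1 : β + (μ a + ∑ k ∈ S, μ k) = (β + μ a) + ∑ k ∈ S, μ k := by ring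
        rw [e1, ih (β + μ a)]
        have e2 : ∀ k ∈ S, fs (β + μ a) + fs (β + μ a + μ k)
            = fs β + fs (β + μ k) := by
          intro k hk
          exact hinv a k (fun h => ha (h ▸ hk)) β
        rw [Finset.sum_congr rfl e2]
        ring_nf
        rw [show (2 : ZMod 2) = 0 by decide]
        ring
    -- convert sums over ω to sums over the support
    have hω : ∀ k : Fin r, ω k = 0 ∨ ω k = 1 := by
      have : ∀ c : ZMod 2, c = 0 ∨ c = 1 := by decide
      exact fun k => this (ω k)
    have hs : (∑ k, algebraMap (ZMod 2) (GaloisField 2 n) (ω k) * μ k)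
        = ∑ k ∈ Finset.univ.filter (fun k => ω k = 1), μ k := by
      rw [Finset.sum_filter]
      apply Finset.sum_congr rfl
      intro k _
      rcases hω k with h | h <;> simp [h]
    have hw : (∑ k, ω k * (fs β + fs (β + μ k)))
        = ∑ k ∈ Finset.univ.filter (fun k => ω k = 1), (fs β + fs (β + μ k)) := by
      rw [Finset.sum_filter]
      apply Finset.sum_congr rfl
      intro k _
      rcases hω k with h | h <;> simp [h]
    rw [hs, hw, main]
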